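/- Let A and B be positive semidefinite complex d×d matrices and let M be a complex (d·m)×(d·m) matrix. Then ‖(√A ⊗ I_m) · M · (√B ⊗ I_m)‖₁ ≤ √(Tr A · Tr B) · ‖M‖₁, where √A, √B are the positive semidefinite square roots, ⊗ is the Kronecker product, and I_m is the m×m identity matrix. -/

import Mathlib

open Matrix BigOperators Kronecker
open scoped ComplexOrder Classical

/-- Junk-valued positive semidefinite square root: for a positive semidefinite matrix it is
the PSD square root, otherwise it is `0`. -/
noncomputable def msqrt {n : Type*} [Fintype n] [DecidableEq n]
    (M : Matrix n n ℂ) : Matrix n n ℂ :=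
  if h : M.PosSemidef then
    (h.1.eigenvectorUnitary : Matrix n n ℂ) * diagonal ((↑) ∘ (√·) ∘ h.1.eigenvalues) *
      (star h.1.eigenvectorUnitary : Matrix n n ℂ) else 0

/-- The trace norm `‖M‖₁ = Tr √(Mᴴ M)` of a square complex matrix. -/
noncomputable def traceNorm {n : Type*} [Fintype n] [DecidableEq n]
    (M : Matrix n n ℂ) : ℝ :=
  (msqrt (Mᴴ * M)).trace.re

set_option maxHeartbeats 1000000
set_option linter.unusedSectionVars false

section Aux
variable {n : Type*} [Fintype n] [DecidableEq n]

lemma trace_conjTranspose_mul_self_re (A : Matrix n n ℂ) :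
    (Aᴴ * A).trace.re = ∑ p : n × n, ‖A p.1 p.2‖ ^ 2 := by
  have : ∀ i j : n, (star (A j i) * A j i).re = ‖A j i‖ ^ 2 := by
    intro i j
    rw [show star (A j i) = (starRingEnd ℂ) (A j i) from rfl, ← Complex.normSq_eq_conj_mul_self,
      Complex.normSq_eq_norm_sq]
    simp [← Complex.ofReal_pow]
  rw [Matrix.trace, Fintype.sum_prod_type]
  simp only [Matrix.diag_apply, Matrix.mul_apply, Matrix.conjTranspose_apply, Complex.re_sum, this]
  exact Finset.sum_comm

lemma psd_trace_re_nonneg {P : Matrix n n ℂ} (hP : P.PosSemidef) : 0 ≤ P.trace.re := by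
  exact (Complex.nonneg_iff.mp hP.trace_nonneg).1

lemma trace_re_mono {C D : Matrix n n ℂ} (h : (D - C).PosSemidef) : C.trace.re ≤ D.trace.re := by
  have := psd_trace_re_nonneg h
  rw [Matrix.trace_sub, Complex.sub_re] at this
  linarith

lemma abs_trace_conjTranspose_mul_le (A B : Matrix n n ℂ) :
    ‖(Aᴴ * B).trace‖ ≤ Real.sqrt ((Aᴴ * A).trace.re) * Real.sqrt ((Bᴴ * B).trace.re) := by
  let a : EuclideanSpace ℂ (n × n) := WithLp.toLp 2 (fun p : n × n => A p.1 p.2)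
  let b : EuclideanSpace ℂ (n × n) := WithLp.toLp 2 (fun p : n × n => B p.1 p.2)
  have htr : (Aᴴ * B).trace = inner ℂ a b := by
    rw [PiLp.inner_apply, Matrix.trace]
    simp only [Matrix.diag_apply, Matrix.mul_apply, Matrix.conjTranspose_apply, RCLike.inner_apply,
      starRingEnd_apply, a, b]
    rw [Fintype.sum_prod_type]
    exact Finset.sum_comm.trans
      (Finset.sum_congr rfl fun _ _ => Finset.sum_congr rfl fun _ _ => mul_comm _ _)
  have hA : Real.sqrt ((Aᴴ * A).trace.re) = ‖a‖ := by
    rw [trace_conjTranspose_mul_self_re, EuclideanSpace.norm_eq]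
  have hB : Real.sqrt ((Bᴴ * B).trace.re) = ‖b‖ := by
    rw [trace_conjTranspose_mul_self_re, EuclideanSpace.norm_eq]
  rw [htr, hA, hB]
  exact norm_inner_le_norm a b

private lemma conj_mul_conj {W D E : Matrix n n ℂ} (hW : star W * W = 1) :
    (W * D * star W) * (W * E * star W) = W * (D * E) * star W := by
  calc (W * D * star W) * (W * E * star W) = W * (D * ((star W * W) * E)) * star W := by
        noncomm_ring
    _ = _ := by rw [hW, one_mul]

variable {S : Matrix n n ℂ} (hS : S.IsHermitian)

lemma mcfc_mul (f g : ℝ → ℝ) : hS.cfc f * hS.cfc g = hS.cfc fun x => f x * g x := by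
  simp only [Matrix.IsHermitian.cfc, Unitary.conjStarAlgAut_apply, Unitary.coe_star]
  rw [conj_mul_conj (Unitary.coe_star_mul_self _), diagonal_mul_diagonal,
    diagonal_eq_diagonal_iff.mpr fun i => ?_]
  simp

lemma mcfc_herm (f : ℝ → ℝ) : (hS.cfc f).IsHermitian := by
  rw [Matrix.IsHermitian.cfc]
  refine isHermitian_mul_mul_conjTranspose _ ?_
  rw [Matrix.IsHermitian, diagonal_conjTranspose,
    diagonal_eq_diagonal_iff.mpr fun i => ?_]
  simp [Pi.star_def]

lemma mcfc_id : hS.cfc (fun x => x) = S := by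
  rw [Matrix.IsHermitian.cfc]
  exact (hS.spectral_theorem).symm

lemma mcfc_const (c : ℝ) : hS.cfc (fun _ => c) = (c : ℂ) • 1 := by
  rw [Matrix.IsHermitian.cfc]
  rw [show diagonal (RCLike.ofReal ∘ (fun _ : ℝ => c) ∘ hS.eigenvalues) =
      (c : ℂ) • (1 : Matrix n n ℂ) by
    rw [← Matrix.diagonal_one, ← Matrix.diagonal_smul,
      diagonal_eq_diagonal_iff.mpr fun i => ?_]
    simp]
  rw [Unitary.conjStarAlgAut_apply, Matrix.mul_smul, Matrix.smul_mul, mul_one, ← Unitary.coe_star,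
    Unitary.coe_mul_star_self]

lemma mcfc_zero_fn : hS.cfc (fun _ => 0) = 0 := by
  simpa using mcfc_const hS 0

lemma mcfc_psd (f : ℝ → ℝ) (hf : ∀ i, 0 ≤ f (hS.eigenvalues i)) : (hS.cfc f).PosSemidef := by
  rw [Matrix.IsHermitian.cfc]
  exact (Matrix.PosSemidef.diagonal fun i => by
    simpa using Complex.zero_le_real.mpr (hf i)).mul_mul_conjTranspose_same _

lemma mcfc_trace (f : ℝ → ℝ) : (hS.cfc f).trace = ∑ i, (f (hS.eigenvalues i) : ℂ) := by
  rw [Matrix.IsHermitian.cfc, Unitary.conjStarAlgAut_apply, Matrix.trace_mul_cycle,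
    Unitary.coe_star_mul_self, Matrix.one_mul,
    Matrix.trace_diagonal]
  rfl

lemma mcfc_sub (f g : ℝ → ℝ) : hS.cfc f - hS.cfc g = hS.cfc fun x => f x - g x := by
  simp only [Matrix.IsHermitian.cfc, Unitary.conjStarAlgAut_apply]
  rw [← Matrix.sub_mul, ← Matrix.mul_sub, Matrix.diagonal_sub,
    diagonal_eq_diagonal_iff.mpr fun i => ?_]
  simp

noncomputable def Matrix.PosSemidef.sqrt {M : Matrix n n ℂ} (h : M.PosSemidef) : Matrix n n ℂ :=
  (h.1.eigenvectorUnitary : Matrix n n ℂ) * diagonal ((↑) ∘ (√·) ∘ h.1.eigenvalues) *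
    (star h.1.eigenvectorUnitary : Matrix n n ℂ)

lemma Matrix.PosSemidef.sqrt_eq_cfc {M : Matrix n n ℂ} (h : M.PosSemidef) :
    h.sqrt = h.1.cfc Real.sqrt := by
  simp only [Matrix.PosSemidef.sqrt, Matrix.IsHermitian.cfc, Unitary.conjStarAlgAut_apply]
  rfl

lemma Matrix.PosSemidef.posSemidef_sqrt {M : Matrix n n ℂ} (h : M.PosSemidef) :
    h.sqrt.PosSemidef := by
  rw [h.sqrt_eq_cfc]
  exact mcfc_psd h.1 _ fun i => Real.sqrt_nonneg _

lemma Matrix.PosSemidef.sqrt_mul_self {M : Matrix n n ℂ} (h : M.PosSemidef) :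
    h.sqrt * h.sqrt = M := by
  rw [h.sqrt_eq_cfc, mcfc_mul]
  conv_rhs => rw [← mcfc_id h.1]
  simp only [Matrix.IsHermitian.cfc]
  congr 1
  rw [diagonal_eq_diagonal_iff]
  intro i
  simp [Real.mul_self_sqrt (h.eigenvalues_nonneg i)]

private noncomputable def pind : ℝ → ℝ := fun x => if x = 0 then 0 else 1

lemma psd_one_sub_of_proj {P : Matrix n n ℂ} (hP : P.IsHermitian) (h2 : P * P = P) :
    (1 - P).PosSemidef := by
  have h : (1 - P)ᴴ * (1 - P) = 1 - P := by
    rw [Matrix.conjTranspose_sub, Matrix.conjTranspose_one, hP]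
    calc (1 - P) * (1 - P) = 1 - P - P + P * P := by noncomm_ring
      _ = 1 - P := by rw [h2]; abel
  rw [← h]
  exact Matrix.posSemidef_conjTranspose_mul_self _

lemma exists_polar (N : Matrix n n ℂ) :
    ∃ U : Matrix n n ℂ,
      U * (Matrix.posSemidef_conjTranspose_mul_self N).sqrt = N ∧
      Uᴴ * N = (Matrix.posSemidef_conjTranspose_mul_self N).sqrt ∧
      (1 - Uᴴ * U).PosSemidef ∧ (1 - U * Uᴴ).PosSemidef := by
  have hNN := Matrix.posSemidef_conjTranspose_mul_self N
  set S := hNN.sqrt with hSdef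
  have hS : S.PosSemidef := hNN.posSemidef_sqrt
  have hSh : S.IsHermitian := hS.1
  have key : ∀ f g h : ℝ → ℝ, (∀ x, f x * g x = h x) →
      hSh.cfc f * hSh.cfc g = hSh.cfc h := by
    intro f g h hx
    rw [mcfc_mul]
    exact congrArg _ (funext hx)
  set T := hSh.cfc (fun x : ℝ => x⁻¹) with hTdef
  set Q := hSh.cfc pind with hQdef
  have hSS : S * S = Nᴴ * N := hNN.sqrt_mul_self
  have hTh : Tᴴ = T := mcfc_herm hSh _
  have hQh : Qᴴ = Q := mcfc_herm hSh _
  have hTS : T * S = Q := by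
    have h := key (fun x : ℝ => x⁻¹) (fun x => x) pind fun x => by
      rcases eq_or_ne x 0 with h | h <;> simp [pind, h, inv_mul_cancel₀]
    rwa [mcfc_id hSh] at h
  have hST : S * T = Q := by
    have h := key (fun x : ℝ => x) (fun x => x⁻¹) pind fun x => by
      rcases eq_or_ne x 0 with h | h <;> simp [pind, h, mul_inv_cancel₀]
    rwa [mcfc_id hSh] at h
  have hQS : Q * S = S := by
    have h := key pind (fun x : ℝ => x) (fun x => x) fun x => by
      rcases eq_or_ne x 0 with h | h <;> simp [pind, h]
    rwa [mcfc_id hSh] at h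
  have hSQ : S * Q = S := by
    have h := key (fun x : ℝ => x) pind (fun x => x) fun x => by
      rcases eq_or_ne x 0 with h | h <;> simp [pind, h]
    rwa [mcfc_id hSh] at h
  have hQQ : Q * Q = Q := key pind pind pind fun x => by
    rcases eq_or_ne x 0 with h | h <;> simp [pind, h]
  have hTQT : T * Q * T = T * T := by
    have h1 : T * Q = T := key (fun x : ℝ => x⁻¹) pind (fun x => x⁻¹) fun x => by
      rcases eq_or_ne x 0 with h | h <;> simp [pind, h]
    rw [h1]
  have h1Q : (1 - Q).PosSemidef := by
    have h1 : (1 : Matrix n n ℂ) = hSh.cfc (fun _ => 1) := by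
      rw [mcfc_const]; simp
    rw [h1, hQdef, mcfc_sub]
    refine mcfc_psd hSh _ fun i => ?_
    rcases eq_or_ne (hSh.eigenvalues i) 0 with h | h <;> simp [pind, h]
  refine ⟨N * T, ?_, ?_, ?_, ?_⟩
  · -- (N * T) * S = N
    have hNQ : N * Q = N := by
      have hz : (N * (1 - Q))ᴴ * (N * (1 - Q)) = 0 := by
        rw [Matrix.conjTranspose_mul, Matrix.conjTranspose_sub, Matrix.conjTranspose_one, hQh]
        calc (1 - Q) * Nᴴ * (N * (1 - Q)) = (1 - Q) * (Nᴴ * N) * (1 - Q) := by noncomm_ring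
          _ = ((1 - Q) * (S * Q)) * (S * (1 - Q)) := by rw [hSQ, ← hSS]; noncomm_ring
          _ = 0 := by
              rw [Matrix.mul_sub S, Matrix.mul_one, hSQ, sub_self, Matrix.mul_zero]
      have h' := Matrix.conjTranspose_mul_self_eq_zero.mp hz
      rw [Matrix.mul_sub, Matrix.mul_one] at h'
      exact (sub_eq_zero.mp h').symm
    rw [Matrix.mul_assoc, hTS, hNQ]
  · rw [Matrix.conjTranspose_mul, hTh, Matrix.mul_assoc, ← hSS, ← Matrix.mul_assoc, hTS, hQS]
  · have hUU : (N * T)ᴴ * (N * T) = Q := by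
      rw [Matrix.conjTranspose_mul, hTh]
      calc T * Nᴴ * (N * T) = T * (Nᴴ * N) * T := by noncomm_ring
        _ = (T * S) * (S * T) := by rw [← hSS]; noncomm_ring
        _ = Q := by rw [hTS, hST, hQQ]
    rw [hUU]; exact h1Q
  · have hUUh : ((N * T) * (N * T)ᴴ).IsHermitian := by
      rw [Matrix.IsHermitian, Matrix.conjTranspose_mul, Matrix.conjTranspose_conjTranspose]
    have hTT : T * (Nᴴ * N) * T = Q := by
      calc T * (Nᴴ * N) * T = (T * S) * (S * T) := by rw [← hSS]; noncomm_ring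
        _ = Q := by rw [hTS, hST, hQQ]
    have hproj : ((N * T) * (N * T)ᴴ) * ((N * T) * (N * T)ᴴ) = (N * T) * (N * T)ᴴ := by
      rw [Matrix.conjTranspose_mul, hTh]
      calc N * T * (T * Nᴴ) * (N * T * (T * Nᴴ))
          = N * (T * (T * (Nᴴ * N) * T) * T) * Nᴴ := by noncomm_ring
        _ = N * (T * Q * T) * Nᴴ := by rw [hTT]
        _ = N * T * (T * Nᴴ) := by rw [hTQT]; noncomm_ring
    exact psd_one_sub_of_proj hUUh hproj
lemma abs_trace_mul_le {C M : Matrix n n ℂ} {c : ℝ} (hc : 0 ≤ c)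
    (h : ((c : ℂ) • 1 - Cᴴ * C).PosSemidef) :
    ‖(C * M).trace‖ ≤ Real.sqrt c * traceNorm M := by
  have hNN := Matrix.posSemidef_conjTranspose_mul_self M
  obtain ⟨U, hUS, hUN, hUU, hUUc⟩ := exists_polar M
  set S := hNN.sqrt with hSdef
  have hS : S.PosSemidef := hNN.posSemidef_sqrt
  set R := hS.sqrt with hRdef
  have hR : R.PosSemidef := hS.posSemidef_sqrt
  have hRh : Rᴴ = R := hR.1
  have hRR : R * R = S := hS.sqrt_mul_self
  have htS : 0 ≤ S.trace.re := psd_trace_re_nonneg hS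
  have htn : traceNorm M = S.trace.re := by
    rw [traceNorm, msqrt, dif_pos hNN]
    rfl
  have htrace : (C * M).trace = (Rᴴ * (C * U * R)).trace := by
    rw [hRh]
    calc (C * M).trace = ((C * U * R) * R).trace := by
          rw [← hUS, ← hRR]; noncomm_ring
      _ = (R * (C * U * R)).trace := Matrix.trace_mul_comm _ _
  have hB : (C * U * R)ᴴ * (C * U * R) = (U * R)ᴴ * (Cᴴ * C) * (U * R) := by
    simp only [Matrix.conjTranspose_mul]
    noncomm_ring
  have step1 : ((C * U * R)ᴴ * (C * U * R)).trace.re ≤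
      c * ((U * R)ᴴ * (U * R)).trace.re := by
    have hpsd := h.conjTranspose_mul_mul_same (U * R)
    have hD : (U * R)ᴴ * ((c : ℂ) • 1 - Cᴴ * C) * (U * R) =
        (c : ℂ) • ((U * R)ᴴ * (U * R)) - (U * R)ᴴ * (Cᴴ * C) * (U * R) := by
      rw [Matrix.mul_sub, Matrix.sub_mul, Matrix.mul_smul, Matrix.mul_one, Matrix.smul_mul]
    rw [hD, ← hB] at hpsd
    have := trace_re_mono hpsd
    rwa [Matrix.trace_smul, smul_eq_mul, Complex.mul_re, Complex.ofReal_re, Complex.ofReal_im,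
      zero_mul, sub_zero] at this
  have step2 : ((U * R)ᴴ * (U * R)).trace.re ≤ S.trace.re := by
    have hpsd := hUU.conjTranspose_mul_mul_same R
    have hD : Rᴴ * (1 - Uᴴ * U) * R = R * R - (U * R)ᴴ * (U * R) := by
      simp only [Matrix.conjTranspose_mul, hRh]
      noncomm_ring
    rw [hD, hRR] at hpsd
    exact trace_re_mono hpsd
  have hRtr : (Rᴴ * R).trace = S.trace := by rw [hRh, hRR]
  calc ‖(C * M).trace‖ = ‖(Rᴴ * (C * U * R)).trace‖ := by rw [htrace]
    _ ≤ Real.sqrt ((Rᴴ * R).trace.re) *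
        Real.sqrt (((C * U * R)ᴴ * (C * U * R)).trace.re) :=
          abs_trace_conjTranspose_mul_le _ _
    _ ≤ Real.sqrt (S.trace.re) * Real.sqrt (c * S.trace.re) := by
        rw [hRtr]
        refine mul_le_mul_of_nonneg_left (Real.sqrt_le_sqrt ?_) (Real.sqrt_nonneg _)
        calc ((C * U * R)ᴴ * (C * U * R)).trace.re ≤ c * ((U * R)ᴴ * (U * R)).trace.re := step1
          _ ≤ c * S.trace.re := mul_le_mul_of_nonneg_left step2 hc
    _ = Real.sqrt c * traceNorm M := by
        rw [htn, Real.sqrt_mul hc, ← mul_assoc, mul_comm (Real.sqrt S.trace.re),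
          mul_assoc, Real.mul_self_sqrt htS]

lemma kron_conjTranspose {m : Type*} [Fintype m] [DecidableEq m]
    (A : Matrix n n ℂ) (B : Matrix m m ℂ) : (A ⊗ₖ B)ᴴ = Aᴴ ⊗ₖ Bᴴ := by
  ext ⟨i, k⟩ ⟨j, l⟩
  simp [Matrix.conjTranspose_apply, Matrix.kroneckerMap_apply, star_mul']

lemma kron_psd {m : Type*} [Fintype m] [DecidableEq m]
    {P : Matrix n n ℂ} {Q : Matrix m m ℂ} (hP : P.PosSemidef) (hQ : Q.PosSemidef) :
    (P ⊗ₖ Q).PosSemidef := by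
  have : P ⊗ₖ Q = (hP.sqrt ⊗ₖ hQ.sqrt)ᴴ * (hP.sqrt ⊗ₖ hQ.sqrt) := by
    rw [kron_conjTranspose, hP.posSemidef_sqrt.1, hQ.posSemidef_sqrt.1, ← Matrix.mul_kronecker_mul,
      hP.sqrt_mul_self, hQ.sqrt_mul_self]
  rw [this]
  exact Matrix.posSemidef_conjTranspose_mul_self _

lemma psd_smul_of_psd {P : Matrix n n ℂ} (hP : P.PosSemidef) {c : ℝ} (hc : 0 ≤ c) :
    (((c : ℂ)) • P).PosSemidef := by
  obtain ⟨B, rfl⟩ : ∃ B : Matrix n n ℂ, P = Bᴴ * B :=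
    ⟨hP.sqrt, by rw [hP.posSemidef_sqrt.1, hP.sqrt_mul_self]⟩
  have : (c : ℂ) • (Bᴴ * B) = ((Real.sqrt c : ℂ) • B)ᴴ * ((Real.sqrt c : ℂ) • B) := by
    rw [Matrix.conjTranspose_smul, Matrix.smul_mul, Matrix.mul_smul, smul_smul]
    congr 1
    rw [Complex.star_def, Complex.conj_ofReal, ← Complex.ofReal_mul, Real.mul_self_sqrt hc]
  rw [this]
  exact Matrix.posSemidef_conjTranspose_mul_self _

lemma psd_trace_smul_one_sub {P : Matrix n n ℂ} (hP : P.PosSemidef) :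
    (((P.trace.re : ℂ)) • 1 - P).PosSemidef := by
  have hPh := hP.1
  have htr : P.trace.re = ∑ i, hPh.eigenvalues i := by
    have h := mcfc_trace hPh (fun x => x)
    rw [mcfc_id hPh] at h
    rw [h]
    push_cast
    rw [Complex.re_sum]
    simp
  have heq : hPh.cfc (fun x => P.trace.re - x) = ((P.trace.re : ℂ)) • 1 - P := by
    rw [← mcfc_sub, mcfc_const, mcfc_id]
  rw [← heq]
  refine mcfc_psd hPh _ fun i => ?_
  rw [sub_nonneg, htr]
  exact Finset.single_le_sum (fun j _ => hP.eigenvalues_nonneg j) (Finset.mem_univ i)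

end Aux

/-- `‖(√A ⊗ I) M (√B ⊗ I)‖₁ ≤ √(Tr A · Tr B) ‖M‖₁` for positive semidefinite `A`, `B`. -/
theorem traceNorm_sqrt_kronecker_mul {d m : ℕ}
    (A B : Matrix (Fin d) (Fin d) ℂ) (hA : A.PosSemidef) (hB : B.PosSemidef)
    (M : Matrix (Fin d × Fin m) (Fin d × Fin m) ℂ) :
    traceNorm ((msqrt A ⊗ₖ (1 : Matrix (Fin m) (Fin m) ℂ)) * M *
        (msqrt B ⊗ₖ (1 : Matrix (Fin m) (Fin m) ℂ))) ≤
      Real.sqrt (A.trace.re * B.trace.re) * traceNorm M := by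
  have hmsA : msqrt A = hA.sqrt := dif_pos hA
  have hmsB : msqrt B = hB.sqrt := dif_pos hB
  set X : Matrix (Fin d × Fin m) (Fin d × Fin m) ℂ := msqrt A ⊗ₖ (1 : Matrix (Fin m) (Fin m) ℂ)
    with hXdef
  set Y : Matrix (Fin d × Fin m) (Fin d × Fin m) ℂ := msqrt B ⊗ₖ (1 : Matrix (Fin m) (Fin m) ℂ)
    with hYdef
  have hXh : Xᴴ = X := by
    rw [hXdef, kron_conjTranspose, Matrix.conjTranspose_one, hmsA, hA.posSemidef_sqrt.1]
  have hYh : Yᴴ = Y := by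
    rw [hYdef, kron_conjTranspose, Matrix.conjTranspose_one, hmsB, hB.posSemidef_sqrt.1]
  have hXX : X * X = A ⊗ₖ (1 : Matrix (Fin m) (Fin m) ℂ) := by
    rw [hXdef, hmsA, ← Matrix.mul_kronecker_mul, hA.sqrt_mul_self, Matrix.one_mul]
  have hYY : Y * Y = B ⊗ₖ (1 : Matrix (Fin m) (Fin m) ℂ) := by
    rw [hYdef, hmsB, ← Matrix.mul_kronecker_mul, hB.sqrt_mul_self, Matrix.one_mul]
  set cA := A.trace.re with hcA
  set cB := B.trace.re with hcB
  have hcA0 : 0 ≤ cA := psd_trace_re_nonneg hA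
  have hcB0 : 0 ≤ cB := psd_trace_re_nonneg hB
  -- smul-one minus square bounds
  have kronSub : ∀ (P : Matrix (Fin d) (Fin d) ℂ) (c : ℝ),
      ((c : ℂ) • 1 - P) ⊗ₖ (1 : Matrix (Fin m) (Fin m) ℂ) =
        (c : ℂ) • 1 - P ⊗ₖ (1 : Matrix (Fin m) (Fin m) ℂ) := by
    intro P c
    ext ⟨i, k⟩ ⟨j, l⟩
    simp [Matrix.kroneckerMap_apply, Matrix.sub_apply, Matrix.smul_apply, Matrix.one_apply,
      Prod.ext_iff, sub_mul]
    rcases eq_or_ne i j with h | h <;> rcases eq_or_ne k l with h' | h' <;>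
      simp [h, h', mul_comm]
  have hXA : ((cA : ℂ) • 1 - X * X).PosSemidef := by
    rw [hXX, ← kronSub]
    exact kron_psd (psd_trace_smul_one_sub hA) Matrix.PosSemidef.one
  have hYB : ((cB : ℂ) • 1 - Y * Y).PosSemidef := by
    rw [hYY, ← kronSub]
    exact kron_psd (psd_trace_smul_one_sub hB) Matrix.PosSemidef.one
  -- polar decomposition of K
  set K := X * M * Y with hKdef
  have hKK := Matrix.posSemidef_conjTranspose_mul_self K
  obtain ⟨U, hUS, hUN, hUU, hUUc⟩ := exists_polar K
  have htnK : traceNorm K = (Uᴴ * K).trace.re := by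
    rw [traceNorm, msqrt, dif_pos hKK, hUN]
    rfl
  set C := Y * (Uᴴ * X) with hCdef
  have htr : (Uᴴ * K).trace = (C * M).trace := by
    calc (Uᴴ * K).trace = ((Uᴴ * X * M) * Y).trace := by rw [hKdef]; noncomm_ring
      _ = (Y * (Uᴴ * X * M)).trace := Matrix.trace_mul_comm _ _
      _ = (C * M).trace := by rw [hCdef]; noncomm_ring
  have hCC : Cᴴ * C = X * U * (Y * Y) * (Uᴴ * X) := by
    rw [hCdef]
    simp only [Matrix.conjTranspose_mul, hXh, hYh, Matrix.conjTranspose_conjTranspose]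
    noncomm_ring
  have hpsd : (((cA * cB : ℝ) : ℂ) • 1 - Cᴴ * C).PosSemidef := by
    have h1 : ((X * U) * ((cB : ℂ) • 1 - Y * Y) * (X * U)ᴴ).PosSemidef :=
      hYB.mul_mul_conjTranspose_same (X * U)
    have h2 : ((cB : ℂ) • (X * (1 - U * Uᴴ) * Xᴴ)).PosSemidef :=
      psd_smul_of_psd (hUUc.mul_mul_conjTranspose_same X) hcB0
    have h3 : ((cB : ℂ) • ((cA : ℂ) • 1 - X * X)).PosSemidef := psd_smul_of_psd hXA hcB0
    have heq : (((cA * cB : ℝ) : ℂ) • 1 - Cᴴ * C) =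
        (X * U) * ((cB : ℂ) • 1 - Y * Y) * (X * U)ᴴ +
        ((cB : ℂ) • (X * (1 - U * Uᴴ) * Xᴴ) + (cB : ℂ) • ((cA : ℂ) • 1 - X * X)) := by
      rw [hCC]
      simp only [Matrix.conjTranspose_mul, hXh, Matrix.conjTranspose_conjTranspose]
      push_cast
      simp only [Matrix.mul_sub, Matrix.sub_mul, Matrix.mul_smul, Matrix.smul_mul,
        Matrix.mul_one, Matrix.one_mul, smul_sub, smul_smul, Matrix.mul_assoc]
      rw [mul_comm ((cB : ℂ)) ((cA : ℂ))]
      abel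
    rw [heq]
    exact h1.add (h2.add h3)
  have hfinal := abs_trace_mul_le (mul_nonneg hcA0 hcB0) hpsd (M := M)
  calc traceNorm K = (C * M).trace.re := by rw [htnK, htr]
    _ ≤ ‖(C * M).trace‖ := Complex.re_le_norm _
    _ ≤ Real.sqrt (cA * cB) * traceNorm M := hfinal
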